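/- Let I ⊆ ℂ[x₁, x₂] be an ideal of finite colength n supported at the origin whose lex standard set is Δ. Then x₂^{h(Δ)} ∈ I, where h(Δ) is the height of Δ (the number of rows). -/

import Mathlib

open MvPolynomial

def IsStandardSet (Δ : Set (ℕ × ℕ)) : Prop :=
  ∀ γ : ℕ × ℕ, γ ∉ Δ → ∀ δ : ℕ × ℕ, γ + δ ∉ Δ

/-- The pair of exponents of a monomial of `ℂ[x₁, x₂]`, with `x₁ = X 0`, `x₂ = X 1`. -/
def expPair (d : Fin 2 →₀ ℕ) : ℕ × ℕ := (d 0, d 1)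

/-- The set of lexicographic leading exponents (lex order with `x₁ > x₂`) of the nonzero
elements of an ideal `I ⊆ ℂ[x₁, x₂]`.  One has `in_lex(I) = M_Δ` exactly when this set is
the complement of the standard set `Δ`. -/
def leadSet (I : Ideal (MvPolynomial (Fin 2) ℂ)) : Set (ℕ × ℕ) :=
  {α | ∃ f ∈ I, f ≠ 0 ∧ (∃ d ∈ f.support, expPair d = α) ∧
    ∀ d ∈ f.support, toLex (expPair d) ≤ toLex α}

/-- The vanishing set in `𝔸²(ℂ)` of an ideal of `ℂ[x₁, x₂]`. -/
def zeroSet (I : Ideal (MvPolynomial (Fin 2) ℂ)) : Set (ℂ × ℂ) :=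
  {z | ∀ f ∈ I, MvPolynomial.eval ![z.1, z.2] f = 0}

/-- The height `h(Δ) = |p₂(Δ)|`. -/
noncomputable def height (Δ : Set (ℕ × ℕ)) : ℕ := (Prod.snd '' Δ).ncard

/-- For an ideal of colength `n` supported at the origin with lex standard set `Δ`,
the pure power `x₂^{h(Δ)}` lies in the ideal. -/
theorem stmt16 (n : ℕ) (I : Ideal (MvPolynomial (Fin 2) ℂ)) (Δ : Set (ℕ × ℕ))
    (hstd : IsStandardSet Δ) (hfin : Δ.Finite)
    (hcolen : FiniteDimensional ℂ (MvPolynomial (Fin 2) ℂ ⧸ I))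
    (hn : Module.finrank ℂ (MvPolynomial (Fin 2) ℂ ⧸ I) = n)
    (hsupp : zeroSet I = {(0, 0)})
    (hin : leadSet I = Δᶜ) :
    (X 1 : MvPolynomial (Fin 2) ℂ) ^ height Δ ∈ I := by
  classical
  set h := height Δ with hh
  -- Δ is downward closed
  have hΔdown : ∀ a b b' : ℕ, b' ≤ b → (a, b) ∈ Δ → (a, b') ∈ Δ := by
    intro a b b' hle hmem
    by_contra hc
    have := hstd (a, b') hc (0, b - b')
    apply this
    have : (a, b') + (0, b - b') = (a, b) := by
      simp [Prod.ext_iff, Nat.add_sub_cancel' hle]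
    rwa [this]
  -- (0, h) is not in Δ
  have hnot : ((0 : ℕ), h) ∉ Δ := by
    intro hmem
    have hsub : Set.Iic h ⊆ Prod.snd '' Δ := by
      intro b hb
      exact ⟨(0, b), hΔdown 0 h b hb hmem, rfl⟩
    have hcard := Set.ncard_le_ncard hsub (hfin.image _)
    have hIic : (Set.Iic h).ncard = h + 1 := by
      rw [← Finset.coe_Iic, Set.ncard_coe_finset, Nat.card_Iic]
    rw [hIic] at hcard
    have : (Prod.snd '' Δ).ncard = h := rfl
    omega
  -- get a polynomial with lex leading exponent (0, h)
  have hlead : ((0 : ℕ), h) ∈ leadSet I := by rw [hin]; exact hnot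
  obtain ⟨f, hfI, hf0, ⟨d0, hd0mem, hd0e⟩, hmax⟩ := hlead
  have hd0e' : d0 0 = 0 ∧ d0 1 = h := by
    simpa [expPair, Prod.ext_iff] using hd0e
  have hsupp0 : ∀ d ∈ f.support, d 0 = 0 ∧ d 1 ≤ h := by
    intro d hd
    have := hmax d hd
    rw [Prod.Lex.le_iff] at this
    simp only [expPair, ofLex_toLex] at this
    omega
  have hsingle : ∀ d ∈ f.support, d = Finsupp.single 1 (d 1) := by
    intro d hd
    ext i
    fin_cases i
    · simp [(hsupp0 d hd).1, Finsupp.single_apply]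
    · simp [Finsupp.single_apply]
  -- the univariate polynomial corresponding to f
  set g : Polynomial ℂ :=
    ∑ d ∈ f.support, Polynomial.C (MvPolynomial.coeff d f) * Polynomial.X ^ (d 1) with hgdef
  have hg : Polynomial.aeval (X 1 : MvPolynomial (Fin 2) ℂ) g = f := by
    rw [hgdef, map_sum]
    conv_rhs => rw [f.as_sum]
    refine Finset.sum_congr rfl fun d hd => ?_
    rw [map_mul, map_pow, Polynomial.aeval_C, Polynomial.aeval_X, algebraMap_eq,
      X_pow_eq_monomial, C_mul_monomial, mul_one, ← hsingle d hd]
  have hcoeffg : g.coeff h = MvPolynomial.coeff d0 f := by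
    rw [hgdef, Polynomial.finset_sum_coeff]
    rw [Finset.sum_eq_single d0]
    · simp [Polynomial.coeff_C_mul, Polynomial.coeff_X_pow, hd0e'.2]
    · intro d hd hne
      have hdh : d 1 ≠ h := by
        intro he
        apply hne
        rw [hsingle d hd, he, ← hd0e'.2, ← hsingle d0 hd0mem]
      simp [Polynomial.coeff_C_mul, Polynomial.coeff_X_pow, hdh, Ne.symm hdh]
    · intro hc; exact absurd hd0mem hc
  have hgne : g ≠ 0 := by
    intro hc
    rw [hc, Polynomial.coeff_zero] at hcoeffg
    exact (MvPolynomial.mem_support_iff.mp hd0mem) hcoeffg.symm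
  have hdeg : g.natDegree ≤ h := by
    rw [hgdef]
    refine Polynomial.natDegree_sum_le_of_forall_le _ _ fun d hd => ?_
    calc (Polynomial.C (MvPolynomial.coeff d f) * Polynomial.X ^ (d 1)).natDegree
        ≤ (Polynomial.C (MvPolynomial.coeff d f)).natDegree +
            ((Polynomial.X : Polynomial ℂ) ^ (d 1)).natDegree := Polynomial.natDegree_mul_le
      _ ≤ h := by
          rw [Polynomial.natDegree_C, Polynomial.natDegree_X_pow]
          simpa using (hsupp0 d hd).2
  -- Nullstellensatz: X 1 is in the radical of I
  have hrad : (X 1 : MvPolynomial (Fin 2) ℂ) ∈ I.radical := by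
    rw [← MvPolynomial.vanishingIdeal_zeroLocus_eq_radical (K := ℂ)]
    rw [MvPolynomial.mem_vanishingIdeal_iff]
    intro x hx
    have hxz : ((x 0 : ℂ), (x 1 : ℂ)) ∈ zeroSet I := by
      intro p hp
      have hxx : ![x 0, x 1] = x := by
        funext i; fin_cases i <;> simp
      rw [hxx]
      exact (MvPolynomial.mem_zeroLocus_iff.mp hx) p hp
    rw [hsupp] at hxz
    have hx1 : x 1 = 0 := by
      exact (by simpa [Prod.ext_iff] using hxz : x 0 = 0 ∧ x 1 = 0).2
    simp [hx1]
  obtain ⟨N, hN⟩ := Ideal.mem_radical_iff.mp hrad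
  -- pass to the univariate ideal
  set J : Ideal (Polynomial ℂ) :=
    I.comap (Polynomial.aeval (X 1 : MvPolynomial (Fin 2) ℂ)) with hJdef
  have hXN : (Polynomial.X : Polynomial ℂ) ^ N ∈ J := by
    rw [hJdef, Ideal.mem_comap, map_pow, Polynomial.aeval_X]
    exact hN
  have hgJ : g ∈ J := by
    rw [hJdef, Ideal.mem_comap, hg]
    exact hfI
  have hpd : Submodule.IsPrincipal.generator J ∣ (Polynomial.X : Polynomial ℂ) ^ N :=
    (Submodule.IsPrincipal.mem_iff_generator_dvd J).mp hXN
  obtain ⟨i, hiN, hass⟩ := (dvd_prime_pow Polynomial.prime_X N).mp hpd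
  have hXig : (Polynomial.X : Polynomial ℂ) ^ i ∣ g :=
    (hass.symm.dvd).trans ((Submodule.IsPrincipal.mem_iff_generator_dvd J).mp hgJ)
  have hih : i ≤ h := by
    have := Polynomial.natDegree_le_of_dvd hXig hgne
    rw [Polynomial.natDegree_X_pow] at this
    omega
  have hXiJ : (Polynomial.X : Polynomial ℂ) ^ i ∈ J :=
    (Submodule.IsPrincipal.mem_iff_generator_dvd J).mpr hass.dvd
  have hXhJ : (Polynomial.X : Polynomial ℂ) ^ h ∈ J := by
    have := J.mul_mem_left ((Polynomial.X : Polynomial ℂ) ^ (h - i)) hXiJ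
    rwa [← pow_add, Nat.sub_add_cancel hih] at this
  rw [hJdef, Ideal.mem_comap, map_pow, Polynomial.aeval_X] at hXhJ
  exact hXhJ
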